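/- Let f₁, g₁, f₂, g₂ be continuous on [t₀, τ₀) with f₁(t) ≥ 0. Let y₂ solve y' + f₂y² + g₂ = 0 on [t₀, τ₀), let η₁ and η₂ solve the inequalities η' + fⱼη² + gⱼ ≥ 0 (j = 1,2) on [t₀, τ₀), with y₂(t₀) ≤ ηⱼ(t₀) for j = 1,2. Suppose there exists y₍₀₎ ∈ [y₂(t₀), η₁(t₀)] such that for all t ∈ [t₀, τ₀): y₍₀₎ - y₂(t₀) + ∫_{t₀}^t exp{∫_{t₀}^τ f₁(s)(η₁(s)+η₂(s))ds} · [(f₂(τ)-f₁(τ))y₂(τ)² + g₂(τ) - g₁(τ)] dτ ≥ 0. Then the Riccati equation y' + f₁y² + g₁ = 0 has a solution y₁ on all of [t₀, τ₀) with y₁(t₀) ≥ y₍₀₎ and y₁(t) ≥ y₂(t) for all t ∈ [t₀, τ₀). -/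

import Mathlib

open Set intervalIntegral Filter Topology

open Set intervalIntegral

lemma RiccAux.primitive_continuousOn {a b : ℝ} (hab : a ≤ b) {c : ℝ → ℝ}
    (hc : ContinuousOn c (Icc a b)) :
    ContinuousOn (fun t => ∫ s in a..t, c s) (Icc a b) := by
  have h := intervalIntegral.continuousOn_primitive_interval
    (μ := MeasureTheory.volume) (f := c) (a := a) (b := b) ?_
  · rwa [uIcc_of_le hab] at h
  · rw [uIcc_of_le hab]
    exact hc.integrableOn_Icc

lemma RiccAux.primitive_hasDerivAt {a b : ℝ} {c : ℝ → ℝ}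
    (hc : ContinuousOn c (Icc a b)) {x : ℝ} (hx : x ∈ Ioo a b) :
    HasDerivAt (fun t => ∫ s in a..t, c s) (c x) x := by
  apply intervalIntegral.integral_hasDerivAt_right
  · apply ContinuousOn.intervalIntegrable
    apply hc.mono
    rw [uIcc_of_le hx.1.le]
    exact Icc_subset_Icc le_rfl hx.2.le
  · exact ContinuousOn.stronglyMeasurableAtFilter isOpen_Ioo
      (hc.mono Ioo_subset_Icc_self) x hx
  · exact (hc.mono Ioo_subset_Icc_self).continuousAt (Ioo_mem_nhds hx.1 hx.2)

/-- Grönwall-type sign lemma: if `u a ≤ 0` and `u' ≤ c * u` on the interior,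
then `u ≤ 0` on `[a,b]`. -/
lemma RiccAux.gronwall_nonpos {a b : ℝ} (hab : a ≤ b) {u u' c : ℝ → ℝ}
    (hu : ContinuousOn u (Icc a b)) (hc : ContinuousOn c (Icc a b))
    (hd : ∀ t ∈ Ioo a b, HasDerivAt u (u' t) t)
    (hle : ∀ t ∈ Ioo a b, u' t ≤ c t * u t)
    (ha : u a ≤ 0) : ∀ t ∈ Icc a b, u t ≤ 0 := by
  set I : ℝ → ℝ := fun t => ∫ s in a..t, c s with hI
  set g : ℝ → ℝ := fun t => u t * Real.exp (-(I t)) with hg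
  have hIc : ContinuousOn I (Icc a b) := RiccAux.primitive_continuousOn hab hc
  have hgc : ContinuousOn g (Icc a b) :=
    hu.mul ((Real.continuous_exp.comp_continuousOn hIc.neg))
  have hgd : ∀ x ∈ Ioo a b,
      HasDerivAt g ((u' x - c x * u x) * Real.exp (-(I x))) x := by
    intro x hx
    have h1 : HasDerivAt (fun t => Real.exp (-(I t))) (Real.exp (-(I x)) * (-(c x))) x :=
      ((RiccAux.primitive_hasDerivAt hc hx).neg).exp
    have h2 := (hd x hx).mul h1
    refine h2.congr_deriv ?_
    ring
  have hanti : AntitoneOn g (Icc a b) := by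
    apply antitoneOn_of_deriv_nonpos (convex_Icc a b) hgc
    · intro x hx
      rw [interior_Icc] at hx
      exact (hgd x hx).differentiableAt.differentiableWithinAt
    · intro x hx
      rw [interior_Icc] at hx
      rw [(hgd x hx).deriv]
      have := hle x hx
      have := Real.exp_pos (-(I x))
      nlinarith
  intro t ht
  have h1 : g t ≤ g a := hanti (left_mem_Icc.2 hab) ht ht.1
  have h2 : g a = u a := by
    simp [hg, hI, intervalIntegral.integral_same]
  have h3 : u t * Real.exp (-(I t)) ≤ 0 := by
    rw [h2] at h1; exact h1.trans ha
  have h4 := Real.exp_pos (-(I t))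
  nlinarith [h3]

/-- If `H` has zero derivative in the interior and is continuous, it is constant. -/
lemma RiccAux.const_of_deriv_zero {a b : ℝ} (hab : a ≤ b) {H : ℝ → ℝ}
    (hc : ContinuousOn H (Icc a b))
    (hd : ∀ x ∈ Ioo a b, HasDerivAt H 0 x) :
    ∀ t ∈ Icc a b, H t = H a := by
  have hmono : MonotoneOn H (Icc a b) := by
    apply monotoneOn_of_deriv_nonneg (convex_Icc a b) hc
    · intro x hx; rw [interior_Icc] at hx
      exact (hd x hx).differentiableAt.differentiableWithinAt
    · intro x hx; rw [interior_Icc] at hx; rw [(hd x hx).deriv]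
  have hanti : AntitoneOn H (Icc a b) := by
    apply antitoneOn_of_deriv_nonpos (convex_Icc a b) hc
    · intro x hx; rw [interior_Icc] at hx
      exact (hd x hx).differentiableAt.differentiableWithinAt
    · intro x hx; rw [interior_Icc] at hx; rw [(hd x hx).deriv]
  intro t ht
  exact le_antisymm (hanti (left_mem_Icc.2 hab) ht ht.1) (hmono (left_mem_Icc.2 hab) ht ht.1)

/-- Core lower-bound machinery. -/
lemma RiccAux.lower_bound
    (t₀ τ₀ : ℝ) (f₁ g₁ f₂ g₂ : ℝ → ℝ)
    (hf₁ : ContinuousOn f₁ (Ico t₀ τ₀)) (hg₁ : ContinuousOn g₁ (Ico t₀ τ₀))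
    (hf₂ : ContinuousOn f₂ (Ico t₀ τ₀)) (hg₂ : ContinuousOn g₂ (Ico t₀ τ₀))
    (hf₁0 : ∀ t ∈ Ico t₀ τ₀, 0 ≤ f₁ t)
    (y₂ : ℝ → ℝ)
    (hy₂ : ∀ t ∈ Ico t₀ τ₀, HasDerivAt y₂ (-(f₂ t * y₂ t ^ 2 + g₂ t)) t)
    (η₁ η₂ : ℝ → ℝ)
    (hη₁c : ContinuousOn η₁ (Ico t₀ τ₀)) (hη₂c : ContinuousOn η₂ (Ico t₀ τ₀))
    (y₀ : ℝ) (hy₀1 : y₂ t₀ ≤ y₀) (hy₀2 : y₀ ≤ η₁ t₀)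
    (hint : ∀ t ∈ Ico t₀ τ₀,
      0 ≤ y₀ - y₂ t₀ + ∫ τ in t₀..t,
        Real.exp (∫ s in t₀..τ, f₁ s * (η₁ s + η₂ s)) *
          ((f₂ τ - f₁ τ) * y₂ τ ^ 2 + g₂ τ - g₁ τ))
    (b : ℝ) (hb : b ∈ Ico t₀ τ₀)
    (α : ℝ → ℝ) (hαc : ContinuousOn α (Icc t₀ b)) (hα0 : α t₀ = η₁ t₀)
    (hαd : ∀ s ∈ Ioo t₀ b, HasDerivAt α (-(f₁ s * α s ^ 2 + g₁ s)) s)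
    (hαη : ∀ s ∈ Icc t₀ b, α s ≤ η₁ s)
    (hyη₂ : ∀ s ∈ Icc t₀ b, y₂ s ≤ η₂ s) :
    ∀ s ∈ Icc t₀ b, y₂ s ≤ α s := by
  have hsub : Icc t₀ b ⊆ Ico t₀ τ₀ := fun s hs => ⟨hs.1, lt_of_le_of_lt hs.2 hb.2⟩
  have hab : t₀ ≤ b := hb.1
  have hy₂c : ContinuousOn y₂ (Icc t₀ b) := fun s hs =>
    ((hy₂ s (hsub hs)).continuousAt).continuousWithinAt
  set a := y₀ - y₂ t₀ with ha
  set P : ℝ → ℝ := fun s => f₁ s * (α s + y₂ s) with hP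
  set Q : ℝ → ℝ := fun s => f₁ s * (η₁ s + η₂ s) with hQ
  set F : ℝ → ℝ := fun s => (f₂ s - f₁ s) * y₂ s ^ 2 + g₂ s - g₁ s with hF
  have hPc : ContinuousOn P (Icc t₀ b) := (hf₁.mono hsub).mul (hαc.add hy₂c)
  have hQc : ContinuousOn Q (Icc t₀ b) :=
    (hf₁.mono hsub).mul ((hη₁c.mono hsub).add (hη₂c.mono hsub))
  have hFc : ContinuousOn F (Icc t₀ b) :=
    ((((hf₂.mono hsub).sub (hf₁.mono hsub)).mul (hy₂c.pow 2)).add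
      (hg₂.mono hsub)).sub (hg₁.mono hsub)
  set IP : ℝ → ℝ := fun t => ∫ s in t₀..t, P s with hIP
  set IQ : ℝ → ℝ := fun t => ∫ s in t₀..t, Q s with hIQ
  have hIPc : ContinuousOn IP (Icc t₀ b) := RiccAux.primitive_continuousOn hab hPc
  have hIQc : ContinuousOn IQ (Icc t₀ b) := RiccAux.primitive_continuousOn hab hQc
  have hIPd : ∀ x ∈ Ioo t₀ b, HasDerivAt IP (P x) x := fun x hx =>
    RiccAux.primitive_hasDerivAt hPc hx
  have hIQd : ∀ x ∈ Ioo t₀ b, HasDerivAt IQ (Q x) x := fun x hx =>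
    RiccAux.primitive_hasDerivAt hQc hx
  -- the integrand of the hypothesis `hint`
  set G : ℝ → ℝ := fun t => a + ∫ τ in t₀..t, Real.exp (IQ τ) * F τ with hG
  have hGnn : ∀ t ∈ Icc t₀ b, 0 ≤ G t := fun t ht => hint t (hsub ht)
  have hEFc : ContinuousOn (fun τ => Real.exp (IQ τ) * F τ) (Icc t₀ b) :=
    (Real.continuous_exp.comp_continuousOn hIQc).mul hFc
  have hGc : ContinuousOn G (Icc t₀ b) :=
    continuousOn_const.add (RiccAux.primitive_continuousOn hab hEFc)
  have hGd : ∀ x ∈ Ioo t₀ b, HasDerivAt G (Real.exp (IQ x) * F x) x := fun x hx =>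
    (RiccAux.primitive_hasDerivAt hEFc hx).const_add a
  -- integrand E·F
  have hEF2c : ContinuousOn (fun τ => Real.exp (IP τ) * F τ) (Icc t₀ b) :=
    (Real.continuous_exp.comp_continuousOn hIPc).mul hFc
  -- D is monotone nonneg
  set D : ℝ → ℝ := fun t =>
    a + (∫ τ in t₀..t, Real.exp (IP τ) * F τ) - Real.exp (IP t - IQ t) * G t with hD
  have hDc : ContinuousOn D (Icc t₀ b) := by
    apply ContinuousOn.sub
    · exact continuousOn_const.add (RiccAux.primitive_continuousOn hab hEF2c)
    · exact (Real.continuous_exp.comp_continuousOn (hIPc.sub hIQc)).mul hGc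
  have hDd : ∀ x ∈ Ioo t₀ b,
      HasDerivAt D ((Q x - P x) * (Real.exp (IP x - IQ x) * G x)) x := by
    intro x hx
    have h1 : HasDerivAt (fun t => ∫ τ in t₀..t, Real.exp (IP τ) * F τ)
        (Real.exp (IP x) * F x) x := RiccAux.primitive_hasDerivAt hEF2c hx
    have h2 : HasDerivAt (fun t => Real.exp (IP t - IQ t))
        (Real.exp (IP x - IQ x) * (P x - Q x)) x :=
      (((hIPd x hx).sub (hIQd x hx))).exp
    have h3 := ((h1.const_add a).sub (h2.mul (hGd x hx)))
    refine h3.congr_deriv ?_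
    have hkey : Real.exp (IP x - IQ x) * Real.exp (IQ x) = Real.exp (IP x) := by
      rw [← Real.exp_add, sub_add_cancel]
    have hGx : G x = a + ∫ τ in t₀..x, Real.exp (IQ τ) * F τ := rfl
    rw [hGx]
    linear_combination (-F x) * hkey
  have hDmono : MonotoneOn D (Icc t₀ b) := by
    apply monotoneOn_of_deriv_nonneg (convex_Icc t₀ b) hDc
    · intro x hx; rw [interior_Icc] at hx
      exact (hDd x hx).differentiableAt.differentiableWithinAt
    · intro x hx; rw [interior_Icc] at hx
      rw [(hDd x hx).deriv]
      have hx' : x ∈ Icc t₀ b := Ioo_subset_Icc_self hx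
      have hQP : P x ≤ Q x := by
        have h1 := hf₁0 x (hsub hx')
        have h2 := hαη x hx'
        have h3 := hyη₂ x hx'
        simp only [hP, hQ]
        nlinarith
      exact mul_nonneg (by linarith) (mul_nonneg (Real.exp_pos _).le (hGnn x hx'))
  have hD0 : D t₀ = 0 := by
    simp only [hD, hG, intervalIntegral.integral_same, hIP, hIQ]
    simp
  have hDnn : ∀ t ∈ Icc t₀ b, 0 ≤ D t := by
    intro t ht
    have := hDmono (left_mem_Icc.2 hab) ht ht.1
    rw [hD0] at this; exact this
  -- H is constant
  set H : ℝ → ℝ := fun t =>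
    Real.exp (IP t) * (α t - y₂ t) - ∫ τ in t₀..t, Real.exp (IP τ) * F τ with hH
  have hHc : ContinuousOn H (Icc t₀ b) :=
    ((Real.continuous_exp.comp_continuousOn hIPc).mul (hαc.sub hy₂c)).sub
      (RiccAux.primitive_continuousOn hab hEF2c)
  have hHd : ∀ x ∈ Ioo t₀ b, HasDerivAt H 0 x := by
    intro x hx
    have hxI : x ∈ Ico t₀ τ₀ := hsub (Ioo_subset_Icc_self hx)
    have h1 : HasDerivAt (fun t => Real.exp (IP t)) (Real.exp (IP x) * P x) x :=
      (hIPd x hx).exp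
    have h2 : HasDerivAt (fun t => α t - y₂ t)
        (-(f₁ x * α x ^ 2 + g₁ x) - -(f₂ x * y₂ x ^ 2 + g₂ x)) x :=
      (hαd x hx).sub (hy₂ x hxI)
    have h3 : HasDerivAt (fun t => ∫ τ in t₀..t, Real.exp (IP τ) * F τ)
        (Real.exp (IP x) * F x) x := RiccAux.primitive_hasDerivAt hEF2c hx
    have h4 := (h1.mul h2).sub h3
    refine h4.congr_deriv ?_
    simp only [hP, hF]
    ring
  have hHconst : ∀ t ∈ Icc t₀ b, H t = η₁ t₀ - y₂ t₀ := by
    intro t ht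
    have := RiccAux.const_of_deriv_zero hab hHc hHd t ht
    rw [this]
    simp [hH, hIP, hα0]
  -- conclude
  intro s hs
  have h1 : Real.exp (IP s) * (α s - y₂ s)
      = (η₁ t₀ - y₂ t₀) + ∫ τ in t₀..s, Real.exp (IP τ) * F τ := by
    have := hHconst s hs
    simp only [hH] at this
    linarith
  have h2 : a + (∫ τ in t₀..s, Real.exp (IP τ) * F τ)
      = D s + Real.exp (IP s - IQ s) * G s := by
    simp only [hD]; ring
  have h3 : 0 ≤ Real.exp (IP s - IQ s) * G s :=
    mul_nonneg (Real.exp_pos _).le (hGnn s hs)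
  have h4 : y₀ - y₂ t₀ ≤ η₁ t₀ - y₂ t₀ := by linarith
  have h5 : 0 ≤ Real.exp (IP s) * (α s - y₂ s) := by
    rw [h1]
    have := hDnn s hs
    nlinarith [h2]
  nlinarith [Real.exp_pos (IP s), h5]

/-- Existence of a solution on `[t₀, T]` staying between `y₂` and `η₁`. -/
lemma RiccAux.exists_solution_Icc
    (t₀ τ₀ : ℝ) (f₁ g₁ f₂ g₂ : ℝ → ℝ)
    (hf₁ : ContinuousOn f₁ (Ico t₀ τ₀)) (hg₁ : ContinuousOn g₁ (Ico t₀ τ₀))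
    (hf₂ : ContinuousOn f₂ (Ico t₀ τ₀)) (hg₂ : ContinuousOn g₂ (Ico t₀ τ₀))
    (hf₁0 : ∀ t ∈ Ico t₀ τ₀, 0 ≤ f₁ t)
    (y₂ : ℝ → ℝ)
    (hy₂ : ∀ t ∈ Ico t₀ τ₀, HasDerivAt y₂ (-(f₂ t * y₂ t ^ 2 + g₂ t)) t)
    (η₁ η₁' η₂ : ℝ → ℝ)
    (hη₁d : ∀ t ∈ Ico t₀ τ₀, HasDerivAt η₁ (η₁' t) t)
    (hη₁ : ∀ t ∈ Ico t₀ τ₀, 0 ≤ η₁' t + f₁ t * η₁ t ^ 2 + g₁ t)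
    (hη₂c : ContinuousOn η₂ (Ico t₀ τ₀))
    (hyη₂glob : ∀ t ∈ Ico t₀ τ₀, y₂ t ≤ η₂ t)
    (hinit₁ : y₂ t₀ ≤ η₁ t₀)
    (y₀ : ℝ) (hy₀1 : y₂ t₀ ≤ y₀) (hy₀2 : y₀ ≤ η₁ t₀)
    (hint : ∀ t ∈ Ico t₀ τ₀,
      0 ≤ y₀ - y₂ t₀ + ∫ τ in t₀..t,
        Real.exp (∫ s in t₀..τ, f₁ s * (η₁ s + η₂ s)) *
          ((f₂ τ - f₁ τ) * y₂ τ ^ 2 + g₂ τ - g₁ τ))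
    (T : ℝ) (hT : T ∈ Ioo t₀ τ₀) :
    ∃ α : ℝ → ℝ, α t₀ = η₁ t₀ ∧
      (∀ t ∈ Icc t₀ T, HasDerivWithinAt α (-(f₁ t * α t ^ 2 + g₁ t)) (Icc t₀ T) t) ∧
      (∀ t ∈ Icc t₀ T, y₂ t ≤ α t ∧ α t ≤ η₁ t) := by
  have hKsub : Icc t₀ T ⊆ Ico t₀ τ₀ := fun s hs => ⟨hs.1, lt_of_le_of_lt hs.2 hT.2⟩
  have ht₀K : t₀ ∈ Icc t₀ T := left_mem_Icc.2 hT.1.le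
  have hy₂c : ContinuousOn y₂ (Ico t₀ τ₀) := fun s hs =>
    ((hy₂ s hs).continuousAt).continuousWithinAt
  have hη₁c : ContinuousOn η₁ (Ico t₀ τ₀) := fun s hs =>
    ((hη₁d s hs).continuousAt).continuousWithinAt
  have hy₂cK : ContinuousOn y₂ (Icc t₀ T) := hy₂c.mono hKsub
  have hη₁cK : ContinuousOn η₁ (Icc t₀ T) := hη₁c.mono hKsub
  -- bounds
  obtain ⟨z, hzK, hz'⟩ := isCompact_Icc.exists_isMaxOn ⟨t₀, ht₀K⟩
    (((hy₂cK.abs).sup (hη₁cK.abs)).add continuousOn_const :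
      ContinuousOn (fun s => max |y₂ s| |η₁ s| + (1:ℝ)) (Icc t₀ T))
  have hz : ∀ s ∈ Icc t₀ T, max |y₂ s| |η₁ s| + 1 ≤ max |y₂ z| |η₁ z| + 1 :=
    fun s hs => hz' hs
  set N : ℝ := max |y₂ z| |η₁ z| + 1 with hN
  have hNy₂ : ∀ s ∈ Icc t₀ T, |y₂ s| + 1 ≤ N := by
    intro s hs
    have h1 := hz s hs
    have h2 : |y₂ s| ≤ max |y₂ s| |η₁ s| := le_max_left _ _
    simp only [hN]; linarith
  have hNη₁ : ∀ s ∈ Icc t₀ T, |η₁ s| + 1 ≤ N := by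
    intro s hs
    have h1 := hz s hs
    have h2 : |η₁ s| ≤ max |y₂ s| |η₁ s| := le_max_right _ _
    simp only [hN]; linarith
  have hN1 : 1 ≤ N := by
    have := hNy₂ t₀ ht₀K
    have := abs_nonneg (y₂ t₀)
    linarith
  obtain ⟨z₁, hz₁K, hz₁'⟩ := isCompact_Icc.exists_isMaxOn ⟨t₀, ht₀K⟩
    ((hf₁.mono hKsub).abs)
  have hz₁ : ∀ s ∈ Icc t₀ T, |f₁ s| ≤ |f₁ z₁| := fun s hs => hz₁' hs
  set F₁ : ℝ := |f₁ z₁| with hF₁def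
  have hF₁ : ∀ s ∈ Icc t₀ T, |f₁ s| ≤ F₁ := hz₁
  have hF₁0 : 0 ≤ F₁ := abs_nonneg _
  obtain ⟨z₂, hz₂K, hz₂'⟩ := isCompact_Icc.exists_isMaxOn ⟨t₀, ht₀K⟩
    ((hg₁.mono hKsub).abs)
  have hz₂ : ∀ s ∈ Icc t₀ T, |g₁ s| ≤ |g₁ z₂| := fun s hs => hz₂' hs
  set G₁ : ℝ := |g₁ z₂| with hG₁def
  have hG₁ : ∀ s ∈ Icc t₀ T, |g₁ s| ≤ G₁ := hz₂
  have hG₁0 : 0 ≤ G₁ := abs_nonneg _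
  -- clamp
  set clamp : ℝ → ℝ := fun y => max (-N) (min y N) with hclamp
  have hclamp_eq : ∀ y : ℝ, |y| ≤ N → clamp y = y := by
    intro y hy
    rw [abs_le] at hy
    simp only [hclamp]
    rw [min_eq_left hy.2, max_eq_right hy.1]
  have hclamp_abs : ∀ y : ℝ, |clamp y| ≤ N := by
    intro y
    rw [abs_le]
    constructor
    · exact le_max_left _ _
    · exact max_le (by linarith) (min_le_right y N)
  have hclamp_lip : ∀ y z' : ℝ, |clamp y - clamp z'| ≤ |y - z'| := by
    intro y z'
    simp only [hclamp]
    rw [max_comm (-N) (min y N), max_comm (-N) (min z' N)]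
    refine le_trans (abs_max_sub_max_le_abs _ _ _) ?_
    refine le_trans (abs_min_sub_min_le_max y N z' N) ?_
    simp
  set v : ℝ → ℝ → ℝ := fun t y => -(f₁ t * (clamp y) ^ 2 + g₁ t) with hv
  set C : ℝ := F₁ * N ^ 2 + G₁ with hC
  have hC0 : 0 ≤ C := by positivity
  set R : ℝ := C * (T - t₀) + 1 with hR
  set L : NNReal := Real.toNNReal (2 * N * F₁) with hL
  have hLcoe : (L : ℝ) = 2 * N * F₁ := Real.coe_toNNReal _ (by positivity)
  have hR0 : 0 ≤ R := by
    have : 0 ≤ T - t₀ := by linarith [hT.1.le]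
    nlinarith
  have hpl : IsPicardLindelof v (tmin := t₀) (tmax := T) ⟨t₀, ht₀K⟩ (η₁ t₀) R.toNNReal 0
      C.toNNReal L := by
    constructor
    · intro t ht
      apply LipschitzOnWith.of_dist_le_mul
      intro y hy z' hz'
      rw [Real.dist_eq, Real.dist_eq, hLcoe]
      have h1 : v t y - v t z' = f₁ t * ((clamp z' + clamp y) * (clamp z' - clamp y)) := by
        simp only [hv]; ring
      rw [h1, abs_mul, abs_mul]
      have h2 : |clamp z' + clamp y| ≤ 2 * N := by
        have := hclamp_abs z'; have := hclamp_abs y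
        calc |clamp z' + clamp y| ≤ |clamp z'| + |clamp y| := abs_add_le _ _
          _ ≤ 2 * N := by linarith
      have h3 : |clamp z' - clamp y| ≤ |y - z'| := by
        rw [abs_sub_comm y z']
        exact hclamp_lip z' y
      have h4 := hF₁ t ht
      have h5 : (0:ℝ) ≤ |clamp z' - clamp y| := abs_nonneg _
      have h6 : (0:ℝ) ≤ |clamp z' + clamp y| := abs_nonneg _
      have h8 : (0:ℝ) ≤ |y - z'| := abs_nonneg _
      have hN0 : (0:ℝ) ≤ N := by linarith
      calc |f₁ t| * (|clamp z' + clamp y| * |clamp z' - clamp y|)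
          ≤ F₁ * (|clamp z' + clamp y| * |clamp z' - clamp y|) :=
            mul_le_mul_of_nonneg_right h4 (mul_nonneg h6 h5)
        _ ≤ F₁ * ((2 * N) * |y - z'|) := by
            refine mul_le_mul_of_nonneg_left ?_ hF₁0
            exact mul_le_mul h2 h3 h5 (by positivity)
        _ = 2 * N * F₁ * |y - z'| := by ring
    · intro x hx
      exact (((hf₁.mono hKsub).mul continuousOn_const).add (hg₁.mono hKsub)).neg
    · intro t ht x hx
      rw [Real.norm_eq_abs, Real.coe_toNNReal _ hC0]
      have h1 : |v t x| ≤ |f₁ t| * (clamp x) ^ 2 + |g₁ t| := by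
        simp only [hv]
        rw [abs_neg]
        refine le_trans (abs_add_le _ _) ?_
        rw [abs_mul, abs_pow, sq_abs]
      have h2 : (clamp x) ^ 2 ≤ N ^ 2 := by
        have := hclamp_abs x
        nlinarith [abs_nonneg (clamp x), neg_abs_le (clamp x), le_abs_self (clamp x)]
      have h3 := hF₁ t ht
      have h4 := hG₁ t ht
      simp only [hC]
      nlinarith [abs_nonneg (f₁ t), sq_nonneg (clamp x)]
    · have hTt : (0:ℝ) ≤ T - t₀ := by linarith [hT.1.le]
      simp only [Real.coe_toNNReal _ hC0, Real.coe_toNNReal _ hR0, NNReal.coe_zero, sub_zero,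
        sub_self, max_eq_left hTt]
      simp only [hR]
      linarith
  obtain ⟨α, hα0, hαd⟩ := hpl.exists_eq_forall_mem_Icc_hasDerivWithinAt₀
  replace hα0 : α t₀ = η₁ t₀ := hα0
  have hαc : ContinuousOn α (Icc t₀ T) := fun t ht => (hαd t ht).continuousWithinAt
  -- one-step bound propagation
  have hstep : ∀ b ∈ Icc t₀ T, (∀ s ∈ Icc t₀ b, |α s| ≤ N) →
      ∀ s ∈ Icc t₀ b, y₂ s ≤ α s ∧ α s ≤ η₁ s := by
    intro b hbK hNb
    have hbτ : b < τ₀ := lt_of_le_of_lt hbK.2 hT.2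
    have hsubb : Icc t₀ b ⊆ Icc t₀ T := Icc_subset_Icc le_rfl hbK.2
    have htrue : ∀ s ∈ Ioo t₀ b, HasDerivAt α (-(f₁ s * α s ^ 2 + g₁ s)) s := by
      intro s hs
      have hsK : s ∈ Icc t₀ T := hsubb (Ioo_subset_Icc_self hs)
      have h1 := hαd s hsK
      have h2 : v s (α s) = -(f₁ s * α s ^ 2 + g₁ s) := by
        simp only [hv]
        rw [hclamp_eq (α s) (hNb s (Ioo_subset_Icc_self hs))]
      rw [h2] at h1
      exact h1.hasDerivAt (Icc_mem_nhds hs.1 (lt_of_lt_of_le hs.2 hbK.2))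
    have hαη : ∀ s ∈ Icc t₀ b, α s ≤ η₁ s := by
      have hg := RiccAux.gronwall_nonpos (a := t₀) (b := b) hbK.1
        (u := fun s => α s - η₁ s)
        (u' := fun s => -(f₁ s * α s ^ 2 + g₁ s) - η₁' s)
        (c := fun s => -(f₁ s * (α s + η₁ s)))
        ((hαc.mono hsubb).sub (hη₁c.mono (hsubb.trans hKsub)))
        (((hf₁.mono (hsubb.trans hKsub)).mul
            ((hαc.mono hsubb).add (hη₁c.mono (hsubb.trans hKsub)))).neg)
        (fun s hs => (htrue s hs).sub
          (hη₁d s (hKsub (hsubb (Ioo_subset_Icc_self hs)))))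
        (fun s hs => by
          have h := hη₁ s (hKsub (hsubb (Ioo_subset_Icc_self hs)))
          nlinarith)
        (by simp [hα0])
      intro s hs
      have h := hg s hs
      linarith
    have hyα := RiccAux.lower_bound t₀ τ₀ f₁ g₁ f₂ g₂ hf₁ hg₁ hf₂ hg₂ hf₁0 y₂ hy₂
      η₁ η₂ hη₁c hη₂c y₀ hy₀1 hy₀2 hint b ⟨hbK.1, hbτ⟩ α (hαc.mono hsubb) hα0 htrue hαη
      (fun s hs => hyη₂glob s ⟨hs.1, lt_of_le_of_lt hs.2 hbτ⟩)
    exact fun s hs => ⟨hyα s hs, hαη s hs⟩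
  -- the good set is everything
  have hgood : ∀ t ∈ Icc t₀ T, y₂ t ≤ α t ∧ α t ≤ η₁ t := by
    by_contra hcon
    push_neg at hcon
    obtain ⟨t, htK, hbad⟩ := hcon
    set B : Set ℝ := {u | u ∈ Icc t₀ T ∧ ¬(y₂ u ≤ α u ∧ α u ≤ η₁ u)} with hB
    have htB : t ∈ B := ⟨htK, fun hc => absurd hc.2 (not_le.2 (hbad hc.1))⟩
    have hBne : B.Nonempty := ⟨t, htB⟩
    have hBbd : BddBelow B := ⟨t₀, fun u hu => hu.1.1⟩
    set m : ℝ := sInf B with hm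
    have hmK : m ∈ Icc t₀ T :=
      ⟨le_csInf hBne (fun u hu => hu.1.1), le_trans (csInf_le hBbd htB) htK.2⟩
    have hprev : ∀ s ∈ Icc t₀ T, s < m → y₂ s ≤ α s ∧ α s ≤ η₁ s := by
      intro s hsK hsm
      by_contra hb
      exact absurd (csInf_le hBbd ⟨hsK, hb⟩) (not_le.2 hsm)
    have hgoodm : y₂ m ≤ α m ∧ α m ≤ η₁ m := by
      rcases eq_or_lt_of_le hmK.1 with he | hlt
      · refine ⟨?_, ?_⟩
        · rw [← he, hα0]; exact hinit₁
        · rw [← he, hα0]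
      · have key : ∀ f g : ℝ → ℝ, ContinuousOn f (Icc t₀ T) → ContinuousOn g (Icc t₀ T) →
            (∀ s ∈ Icc t₀ T, s < m → f s ≤ g s) → f m ≤ g m := by
          intro f g hf hg hfg
          have hne : (𝓝[Ico t₀ m] m).NeBot := by
            rw [← mem_closure_iff_nhdsWithin_neBot, closure_Ico hlt.ne]
            exact right_mem_Icc.2 hlt.le
          have hsub2 : Ico t₀ m ⊆ Icc t₀ T := fun s hs => ⟨hs.1, le_trans hs.2.le hmK.2⟩
          have hftend : Filter.Tendsto (fun s => g s - f s) (𝓝[Ico t₀ m] m)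
              (𝓝 (g m - f m)) := (((hg.sub hf) m hmK).mono hsub2)
          have h := ge_of_tendsto hftend (Filter.eventually_of_mem self_mem_nhdsWithin
            (fun s hs => sub_nonneg.2 (hfg s (hsub2 hs) hs.2)))
          linarith
        exact ⟨key y₂ α hy₂cK hαc (fun s hs hsm => (hprev s hs hsm).1),
               key α η₁ hαc hη₁cK (fun s hs hsm => (hprev s hs hsm).2)⟩
    have hm1 : |α m| ≤ N - 1 := by
      have h1 := hNy₂ m hmK
      have h2 := hNη₁ m hmK
      rw [abs_le]
      constructor
      · have := neg_abs_le (y₂ m); linarith [hgoodm.1]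
      · have := le_abs_self (η₁ m); linarith [hgoodm.2]
    have hca := hαc m hmK
    rw [Metric.continuousWithinAt_iff] at hca
    obtain ⟨δ, hδ0, hδ⟩ := hca 1 one_pos
    set b : ℝ := min (m + δ / 2) T with hbdef
    have hbK : b ∈ Icc t₀ T :=
      ⟨le_min (by linarith [hmK.1]) (hmK.1.trans hmK.2), min_le_right _ _⟩
    have hNb : ∀ s ∈ Icc t₀ b, |α s| ≤ N := by
      intro s hs
      have hsK' : s ∈ Icc t₀ T := ⟨hs.1, le_trans hs.2 hbK.2⟩
      rcases le_or_gt s m with h1 | h1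
      · have hbd : y₂ s ≤ α s ∧ α s ≤ η₁ s := by
          rcases eq_or_lt_of_le h1 with he | hlt
          · rw [he]; exact hgoodm
          · exact hprev s hsK' hlt
        have ha1 := hNy₂ s hsK'
        have ha2 := hNη₁ s hsK'
        rw [abs_le]
        constructor
        · have := neg_abs_le (y₂ s); linarith [hbd.1]
        · have := le_abs_self (η₁ s); linarith [hbd.2]
      · have hd : dist s m < δ := by
          rw [Real.dist_eq, abs_of_pos (sub_pos.2 h1)]
          have : s ≤ m + δ / 2 := le_trans hs.2 (min_le_left _ _)
          linarith
        have h2 := hδ hsK' hd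
        rw [Real.dist_eq] at h2
        have h3 := abs_sub_abs_le_abs_sub (α s) (α m)
        linarith [hm1]
    have hgoodb := hstep b hbK hNb
    obtain ⟨u, huB, hub⟩ : ∃ u ∈ B, u ≤ b := by
      rcases lt_or_ge m b with h1 | h1
      · obtain ⟨u, huB, hu⟩ := (csInf_lt_iff hBbd hBne).1 h1
        exact ⟨u, huB, hu.le⟩
      · have hTm : T ≤ m := by
          by_contra hc
          push_neg at hc
          have : b = min (m + δ / 2) T := hbdef
          have h2 : m < m + δ / 2 := by linarith
          rcases min_cases (m + δ / 2) T with ⟨heq, _⟩ | ⟨heq, hle⟩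
          · rw [hbdef] at h1; linarith [h1.trans_lt h2]
          · rw [hbdef] at h1
            rw [heq] at h1
            linarith
        have hTb : T ≤ b := by
          have : T ≤ m + δ / 2 := by linarith
          exact le_min this le_rfl
        obtain ⟨u, huB⟩ := hBne
        exact ⟨u, huB, le_trans huB.1.2 hTb⟩
    exact huB.2 (hgoodb u ⟨huB.1.1, hub⟩)
  -- conclude: true equation everywhere on Icc t₀ T
  have hNall : ∀ s ∈ Icc t₀ T, |α s| ≤ N := by
    intro s hs
    have hbd := hgood s hs
    have ha1 := hNy₂ s hs
    have ha2 := hNη₁ s hs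
    rw [abs_le]
    constructor
    · have := neg_abs_le (y₂ s); linarith [hbd.1]
    · have := le_abs_self (η₁ s); linarith [hbd.2]
  refine ⟨α, hα0, ?_, hgood⟩
  intro t ht
  have h1 := hαd t ht
  have h2 : v t (α t) = -(f₁ t * α t ^ 2 + g₁ t) := by
    simp only [hv]
    rw [hclamp_eq (α t) (hNall t ht)]
  rwa [h2] at h1

/-- Theorem 2.1: comparison theorem for two Riccati equations.  Under the stated
integral condition, the first Riccati equation has a global solution `y₁` on `[t₀,τ₀)`
with `y₁(t₀) ≥ y₍₀₎` and `y₁ ≥ y₂`. -/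
theorem riccati_comparison
    (t₀ τ₀ : ℝ) (h : t₀ < τ₀) (f₁ g₁ f₂ g₂ : ℝ → ℝ)
    (hf₁ : ContinuousOn f₁ (Ico t₀ τ₀)) (hg₁ : ContinuousOn g₁ (Ico t₀ τ₀))
    (hf₂ : ContinuousOn f₂ (Ico t₀ τ₀)) (hg₂ : ContinuousOn g₂ (Ico t₀ τ₀))
    (hf₁0 : ∀ t ∈ Ico t₀ τ₀, 0 ≤ f₁ t)
    (y₂ : ℝ → ℝ)
    (hy₂ : ∀ t ∈ Ico t₀ τ₀, HasDerivAt y₂ (-(f₂ t * y₂ t ^ 2 + g₂ t)) t)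
    (η₁ η₁' η₂ η₂' : ℝ → ℝ)
    (hη₁d : ∀ t ∈ Ico t₀ τ₀, HasDerivAt η₁ (η₁' t) t)
    (hη₁ : ∀ t ∈ Ico t₀ τ₀, 0 ≤ η₁' t + f₁ t * η₁ t ^ 2 + g₁ t)
    (hη₂d : ∀ t ∈ Ico t₀ τ₀, HasDerivAt η₂ (η₂' t) t)
    (hη₂ : ∀ t ∈ Ico t₀ τ₀, 0 ≤ η₂' t + f₂ t * η₂ t ^ 2 + g₂ t)
    (hinit₁ : y₂ t₀ ≤ η₁ t₀) (hinit₂ : y₂ t₀ ≤ η₂ t₀)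
    (y₀ : ℝ) (hy₀mem : y₀ ∈ Icc (y₂ t₀) (η₁ t₀))
    (hint : ∀ t ∈ Ico t₀ τ₀,
      0 ≤ y₀ - y₂ t₀ + ∫ τ in t₀..t,
        Real.exp (∫ s in t₀..τ, f₁ s * (η₁ s + η₂ s)) *
          ((f₂ τ - f₁ τ) * y₂ τ ^ 2 + g₂ τ - g₁ τ)) :
    ∃ y₁ : ℝ → ℝ,
      y₀ ≤ y₁ t₀ ∧
      (∀ t ∈ Ico t₀ τ₀, HasDerivAt y₁ (-(f₁ t * y₁ t ^ 2 + g₁ t)) t) ∧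
      ∀ t ∈ Ico t₀ τ₀, y₂ t ≤ y₁ t := by
  have hy₂c : ContinuousOn y₂ (Ico t₀ τ₀) := fun s hs =>
    ((hy₂ s hs).continuousAt).continuousWithinAt
  have hη₂c : ContinuousOn η₂ (Ico t₀ τ₀) := fun s hs =>
    ((hη₂d s hs).continuousAt).continuousWithinAt
  -- Step A: y₂ ≤ η₂ on the whole interval
  have hyη₂glob : ∀ t ∈ Ico t₀ τ₀, y₂ t ≤ η₂ t := by
    intro t ht
    rcases eq_or_lt_of_le ht.1 with he | hlt
    · rw [← he]; exact hinit₂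
    · have hsub : Icc t₀ t ⊆ Ico t₀ τ₀ := fun s hs => ⟨hs.1, lt_of_le_of_lt hs.2 ht.2⟩
      have hg := RiccAux.gronwall_nonpos (a := t₀) (b := t) hlt.le
        (u := fun s => y₂ s - η₂ s)
        (u' := fun s => -(f₂ s * y₂ s ^ 2 + g₂ s) - η₂' s)
        (c := fun s => -(f₂ s * (y₂ s + η₂ s)))
        ((hy₂c.mono hsub).sub (hη₂c.mono hsub))
        (((hf₂.mono hsub).mul ((hy₂c.mono hsub).add (hη₂c.mono hsub))).neg)
        (fun s hs => (hy₂ s (hsub (Ioo_subset_Icc_self hs))).sub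
          (hη₂d s (hsub (Ioo_subset_Icc_self hs))))
        (fun s hs => by
          have hq := hη₂ s (hsub (Ioo_subset_Icc_self hs))
          nlinarith)
        (by linarith)
      have h2 := hg t (right_mem_Icc.2 hlt.le)
      linarith
  -- per-interval solutions
  have key : ∀ T, T ∈ Ioo t₀ τ₀ → ∃ α : ℝ → ℝ, α t₀ = η₁ t₀ ∧
      (∀ t ∈ Icc t₀ T, HasDerivWithinAt α (-(f₁ t * α t ^ 2 + g₁ t)) (Icc t₀ T) t) ∧
      (∀ t ∈ Icc t₀ T, y₂ t ≤ α t ∧ α t ≤ η₁ t) := fun T hT =>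
    RiccAux.exists_solution_Icc t₀ τ₀ f₁ g₁ f₂ g₂ hf₁ hg₁ hf₂ hg₂ hf₁0 y₂ hy₂
      η₁ η₁' η₂ hη₁d hη₁ hη₂c hyη₂glob hinit₁ y₀ hy₀mem.1 hy₀mem.2 hint T hT
  choose! sol hsol0 hsold hsolb using key
  -- uniqueness / gluing
  have huniq : ∀ T T', T ∈ Ioo t₀ τ₀ → T' ∈ Ioo t₀ τ₀ → T ≤ T' →
      ∀ s ∈ Icc t₀ T, sol T s = sol T' s := by
    intro T T' hT hT' hTT' s hs
    have hsub : Icc t₀ T ⊆ Icc t₀ T' := Icc_subset_Icc le_rfl hTT'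
    have hKsub : Icc t₀ T ⊆ Ico t₀ τ₀ := fun u hu => ⟨hu.1, lt_of_le_of_lt hu.2 hT.2⟩
    have hcT : ContinuousOn (sol T) (Icc t₀ T) := fun u hu =>
      (hsold T hT u hu).continuousWithinAt
    have hcT' : ContinuousOn (sol T') (Icc t₀ T) := fun u hu =>
      ((hsold T' hT' u (hsub hu)).continuousWithinAt).mono hsub
    have hdT : ∀ u ∈ Ioo t₀ T, HasDerivAt (sol T) (-(f₁ u * sol T u ^ 2 + g₁ u)) u :=
      fun u hu => (hsold T hT u (Ioo_subset_Icc_self hu)).hasDerivAt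
        (Icc_mem_nhds hu.1 hu.2)
    have hdT' : ∀ u ∈ Ioo t₀ T, HasDerivAt (sol T') (-(f₁ u * sol T' u ^ 2 + g₁ u)) u :=
      fun u hu => (hsold T' hT' u (hsub (Ioo_subset_Icc_self hu))).hasDerivAt
        (Icc_mem_nhds hu.1 (lt_of_lt_of_le hu.2 hTT'))
    have hg := RiccAux.gronwall_nonpos (a := t₀) (b := T) hT.1.le
      (u := fun u => (sol T u - sol T' u) ^ 2)
      (u' := fun u => 2 * (sol T u - sol T' u) *
        ((-(f₁ u * sol T u ^ 2 + g₁ u)) - (-(f₁ u * sol T' u ^ 2 + g₁ u))))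
      (c := fun u => -(2 * f₁ u * (sol T u + sol T' u)))
      ((hcT.sub hcT').pow 2)
      (((continuousOn_const.mul (hf₁.mono hKsub)).mul (hcT.add hcT')).neg)
      (fun u hu => by
        have h1 := ((hdT u hu).sub (hdT' u hu)).pow 2
        refine h1.congr_deriv ?_
        push_cast [Pi.sub_apply]
        ring)
      (fun u hu => le_of_eq (by ring))
      (by rw [hsol0 T hT, hsol0 T' hT']; simp)
    have h2 := hg s hs
    have h3 : (sol T s - sol T' s) ^ 2 = 0 := le_antisymm h2 (sq_nonneg _)
    have h4 : sol T s - sol T' s = 0 := by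
      have := sq_eq_zero_iff.1 h3
      exact this
    linarith
  set k : ℝ := -(f₁ t₀ * (η₁ t₀) ^ 2 + g₁ t₀) with hk
  set mid : ℝ → ℝ := fun t => (t + τ₀) / 2 with hmid
  have hmidmem : ∀ t, t₀ ≤ t → t < τ₀ → mid t ∈ Ioo t₀ τ₀ ∧ t < mid t := by
    intro t h1 h2
    refine ⟨⟨?_, ?_⟩, ?_⟩ <;> simp only [hmid] <;> linarith
  set y₁ : ℝ → ℝ := fun t => if t < t₀ then η₁ t₀ + k * (t - t₀) else sol (mid t) t with hy₁
  have hy₁eq : ∀ T, T ∈ Ioo t₀ τ₀ → ∀ s, t₀ ≤ s → s < T → y₁ s = sol T s := by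
    intro T hT s hs1 hs2
    have hsτ : s < τ₀ := lt_trans hs2 hT.2
    obtain ⟨hmidm, hsmid⟩ := hmidmem s hs1 hsτ
    have h1 : y₁ s = sol (mid s) s := by simp only [hy₁]; rw [if_neg (not_lt.2 hs1)]
    rw [h1]
    rcases le_total (mid s) T with hc | hc
    · exact huniq (mid s) T hmidm hT hc s ⟨hs1, hsmid.le⟩
    · exact (huniq T (mid s) hT hmidm hc s ⟨hs1, hs2.le⟩).symm
  have hy₁t₀ : y₁ t₀ = η₁ t₀ := by
    have hm := (hmidmem t₀ le_rfl h).1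
    simp only [hy₁]
    rw [if_neg (lt_irrefl t₀)]
    exact hsol0 _ hm
  refine ⟨y₁, ?_, ?_, ?_⟩
  · rw [hy₁t₀]; exact hy₀mem.2
  · intro t ht
    rcases eq_or_lt_of_le ht.1 with he | hlt
    · -- t = t₀
      obtain ⟨hTm, ht₀T⟩ := hmidmem t₀ le_rfl h
      set T := mid t₀ with hTdef
      have hr0 : HasDerivWithinAt (sol T) (-(f₁ t₀ * (sol T t₀) ^ 2 + g₁ t₀)) (Icc t₀ T) t₀ :=
        hsold T hTm t₀ (left_mem_Icc.2 ht₀T.le)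
      have hr1 : HasDerivWithinAt (sol T) k (Icc t₀ T) t₀ := by
        have hs0 : sol T t₀ = η₁ t₀ := hsol0 T hTm
        rw [hk]
        rwa [hs0] at hr0
      have hr2 : HasDerivWithinAt (sol T) k (Ici t₀) t₀ :=
        hr1.mono_of_mem_nhdsWithin (Icc_mem_nhdsGE ht₀T)
      have hr3 : HasDerivWithinAt y₁ k (Ici t₀) t₀ := by
        refine hr2.congr_of_eventuallyEq ?_ ?_
        · filter_upwards [Ico_mem_nhdsGE ht₀T] with s hs
          exact hy₁eq T hTm s hs.1 hs.2
        · rw [hy₁t₀, hsol0 T hTm]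
      have hl : HasDerivWithinAt y₁ k (Iic t₀) t₀ := by
        have hlin : HasDerivAt (fun s => η₁ t₀ + k * (s - t₀)) k t₀ := by
          simpa using (((hasDerivAt_id t₀).sub_const t₀).const_mul k).const_add (η₁ t₀)
        refine (hlin.hasDerivWithinAt).congr ?_ ?_
        · intro s hs
          rcases lt_or_eq_of_le (mem_Iic.1 hs) with hs' | hs'
          · simp only [hy₁]; rw [if_pos hs']
          · rw [hs', hy₁t₀]; simp
        · rw [hy₁t₀]; simp
      have hu := hl.union hr3
      rw [Iic_union_Ici] at hu
      have hfin := hasDerivWithinAt_univ.1 hu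
      rw [← he, hy₁t₀]
      exact hfin
    · -- interior point
      obtain ⟨hTm, htT⟩ := hmidmem t ht.1 ht.2
      have heq : y₁ t = sol (mid t) t := hy₁eq (mid t) hTm t ht.1 htT
      have hder : HasDerivAt (sol (mid t)) (-(f₁ t * (sol (mid t) t) ^ 2 + g₁ t)) t :=
        (hsold (mid t) hTm t ⟨ht.1, htT.le⟩).hasDerivAt (Icc_mem_nhds hlt htT)
      have hev : y₁ =ᶠ[𝓝 t] sol (mid t) := by
        filter_upwards [Ioo_mem_nhds hlt htT] with s hs
        exact hy₁eq (mid t) hTm s hs.1.le hs.2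
      rw [heq]
      exact hder.congr_of_eventuallyEq hev
  · intro t ht
    obtain ⟨hTm, htT⟩ := hmidmem t ht.1 ht.2
    rw [hy₁eq (mid t) hTm t ht.1 htT]
    exact (hsolb (mid t) hTm t ⟨ht.1, htT.le⟩).1
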